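/- Vaughan–Lee's loop L does not split into a direct product of loops of prime power order: there exist no binary operations op₁ on Fin 4 and op₂ on Fin 3 and no bijection e : ZMod 12 ≃ Fin 4 × Fin 3 such that e (x * y) = (op₁ (e x).1 (e y).1, op₂ (e x).2 (e y).2) for all x, y ∈ ZMod 12. -/

import Mathlib

/-- The natural projection `ZMod 12 → ZMod 4`. -/
def pi4 : ZMod 12 →+* ZMod 4 := ZMod.castHom (show (4:ℕ) ∣ 12 by norm_num) (ZMod 4)

/-- The cocycle `t` of Vaughan–Lee's loop. -/
def t (x y : ZMod 12) : ZMod 12 :=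
  if (pi4 x = 1 ∧ pi4 y = 3) ∨ (pi4 x = 3 ∧ pi4 y = 1) then 4 else 0

/-- The multiplication of Vaughan–Lee's loop `L`. -/
def mulL (x y : ZMod 12) : ZMod 12 := x + y + t x y

/-- Membership in the 4-element set `{0, x, y, z}`. -/
def mem4 (x y z w : ZMod 12) : Prop := w = 0 ∨ w = x ∨ w = y ∨ w = z

instance (x y z w : ZMod 12) : Decidable (mem4 x y z w) := by
  unfold mem4; infer_instance

set_option maxRecDepth 4000 in
/-- There is no 4-element subset of `L` containing `0` that is closed under `mulL`. -/
lemma no_closed_four : ∀ x y z : ZMod 12,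
    ¬ (x ≠ 0 ∧ y ≠ 0 ∧ z ≠ 0 ∧ x ≠ y ∧ x ≠ z ∧ y ≠ z ∧
      mem4 x y z (mulL 0 0) ∧ mem4 x y z (mulL 0 x) ∧ mem4 x y z (mulL 0 y) ∧
      mem4 x y z (mulL 0 z) ∧ mem4 x y z (mulL x 0) ∧ mem4 x y z (mulL x x) ∧
      mem4 x y z (mulL x y) ∧ mem4 x y z (mulL x z) ∧ mem4 x y z (mulL y 0) ∧
      mem4 x y z (mulL y x) ∧ mem4 x y z (mulL y y) ∧ mem4 x y z (mulL y z) ∧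
      mem4 x y z (mulL z 0) ∧ mem4 x y z (mulL z x) ∧ mem4 x y z (mulL z y) ∧
      mem4 x y z (mulL z z)) := by decide

theorem stmt_3 :
    ¬ ∃ (op₁ : Fin 4 → Fin 4 → Fin 4) (op₂ : Fin 3 → Fin 3 → Fin 3)
        (e : ZMod 12 ≃ Fin 4 × Fin 3),
        ∀ x y : ZMod 12,
          e (mulL x y) = (op₁ (e x).1 (e y).1, op₂ (e x).2 (e y).2) := by
  rintro ⟨op₁, op₂, e, h⟩
  -- `f a` enumerates the fiber of `(e 0).2` under `x ↦ (e x).2`, with `f 0 = 0`.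
  set f : Fin 4 → ZMod 12 := fun a => e.symm (a + (e 0).1, (e 0).2) with hf
  have hf0 : f 0 = 0 := by simp [hf]
  have hfinj : Function.Injective f := by
    intro a b hab
    have := e.symm.injective hab
    have h1 : a + (e 0).1 = b + (e 0).1 := ((Prod.mk.injEq _ _ _ _).mp this).1
    exact add_right_cancel h1
  have hsnd : ∀ a, (e (f a)).2 = (e 0).2 := by intro a; simp [hf]
  -- the fiber is closed under mulL
  have hclosed : ∀ a b : Fin 4, ∃ c : Fin 4, mulL (f a) (f b) = f c := by
    intro a b
    have h00 : mulL 0 0 = 0 := by decide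
    have hM2 : (e (mulL (f a) (f b))).2 = (e 0).2 := by
      have h1 := h (f a) (f b)
      have h2 := h 0 0
      rw [h00] at h2
      rw [h1, h2, hsnd, hsnd]
    refine ⟨(e (mulL (f a) (f b))).1 - (e 0).1, ?_⟩
    rw [hf]
    simp only
    have hc : (e (mulL (f a) (f b))).1 - (e 0).1 + (e 0).1 = (e (mulL (f a) (f b))).1 := sub_add_cancel _ _
    have hpair : ((e (mulL (f a) (f b))).1, (e 0).2) = e (mulL (f a) (f b)) := by
      rw [← hM2]
    rw [hc, hpair, e.symm_apply_apply]
  have hmem : ∀ a b : Fin 4, mem4 (f 1) (f 2) (f 3) (mulL (f a) (f b)) := by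
    intro a b
    obtain ⟨c, hc⟩ := hclosed a b
    have hfin : ∀ d : Fin 4, d = 0 ∨ d = 1 ∨ d = 2 ∨ d = 3 := by decide
    have hc4 := hfin c
    rcases hc4 with rfl | rfl | rfl | rfl
    · exact Or.inl (hc.trans hf0)
    · exact Or.inr (Or.inl hc)
    · exact Or.inr (Or.inr (Or.inl hc))
    · exact Or.inr (Or.inr (Or.inr hc))
  have hne : ∀ a b : Fin 4, a ≠ b → f a ≠ f b := fun a b hab h' => hab (hfinj h')
  refine no_closed_four (f 1) (f 2) (f 3)
    ⟨?_, ?_, ?_, ?_, ?_, ?_, ?_, ?_, ?_, ?_, ?_, ?_, ?_, ?_, ?_, ?_, ?_, ?_, ?_, ?_, ?_, ?_⟩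
  · rw [← hf0]; exact hne 1 0 (by decide)
  · rw [← hf0]; exact hne 2 0 (by decide)
  · rw [← hf0]; exact hne 3 0 (by decide)
  · exact hne 1 2 (by decide)
  · exact hne 1 3 (by decide)
  · exact hne 2 3 (by decide)
  all_goals first
    | (rw [← hf0] at *; first
        | exact hmem 0 0 | exact hmem 0 1 | exact hmem 0 2 | exact hmem 0 3
        | exact hmem 1 0 | exact hmem 1 1 | exact hmem 1 2 | exact hmem 1 3
        | exact hmem 2 0 | exact hmem 2 1 | exact hmem 2 2 | exact hmem 2 3
        | exact hmem 3 0 | exact hmem 3 1 | exact hmem 3 2 | exact hmem 3 3)
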